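/- Let (S₁,·) and (S₂,·) be commutative semigroups and let A ⊆ S₁ and B ⊆ S₂ be J-sets. Then A × B is a J-set in the product semigroup S₁ × S₂ (with coordinatewise multiplication). -/

import Mathlib

/-- The product `∏_{t ∈ H} f t` over a nonempty finite set `H ⊆ ℕ` in a semigroup,
computed in increasing order of the indices (in a commutative semigroup the order
is immaterial). -/
def semigroupProd {S : Type*} [Semigroup S] (f : ℕ → S) (H : Finset ℕ) (hH : H.Nonempty) : S :=
  ((H.sort (· ≤ ·)).tail).foldl (fun x t => x * f t) (f (H.min' hH))

/-- A set `A` in a commutative semigroup `S` is a J-set if for every finite nonempty set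
`F` of sequences in `S` there are `a ∈ S` and a finite nonempty `H ⊆ ℕ` such that
`a * ∏_{t ∈ H} f t ∈ A` for every `f ∈ F`. -/
def IsJSet {S : Type*} [CommSemigroup S] (A : Set S) : Prop :=
  ∀ F : Finset (ℕ → S), F.Nonempty →
    ∃ a : S, ∃ H : Finset ℕ, ∃ hH : H.Nonempty,
      ∀ f ∈ F, a * semigroupProd f H hH ∈ A

/- ### Auxiliary lemmas about `semigroupProd` -/

private lemma foldl_mul_eq {M : Type*} [Monoid M] (g : ℕ → M) :
    ∀ (l : List ℕ) (a : M), l.foldl (fun x t => x * g t) a = a * (l.map g).prod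
  | [], a => by simp
  | t :: l, a => by
    rw [List.foldl_cons, foldl_mul_eq g l (a * g t), List.map_cons, List.prod_cons, mul_assoc]

private lemma foldl_hom_aux {S T : Type*} [Semigroup S] [Semigroup T] (ψ : S → T)
    (hψ : ∀ a b : S, ψ (a * b) = ψ a * ψ b) (f : ℕ → S) :
    ∀ (l : List ℕ) (a : S),
      ψ (l.foldl (fun x t => x * f t) a) = l.foldl (fun x t => x * ψ (f t)) (ψ a)
  | [], _ => rfl
  | t :: l, a => by
    rw [List.foldl_cons, foldl_hom_aux ψ hψ f l (a * f t), List.foldl_cons, hψ]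

lemma semigroupProd_map {S T : Type*} [Semigroup S] [Semigroup T] (ψ : S → T)
    (hψ : ∀ a b : S, ψ (a * b) = ψ a * ψ b) (f : ℕ → S) (H : Finset ℕ) (hH : H.Nonempty) :
    ψ (semigroupProd f H hH) = semigroupProd (fun n => ψ (f n)) H hH :=
  foldl_hom_aux ψ hψ f _ _

lemma semigroupProd_eq_prod {M : Type*} [CommMonoid M] (g : ℕ → M) (H : Finset ℕ)
    (hH : H.Nonempty) : semigroupProd g H hH = ∏ t ∈ H, g t := by
  have hlen : 0 < (H.sort (· ≤ ·)).length := by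
    rw [Finset.length_sort]; exact Finset.card_pos.2 hH
  have hne : H.sort (· ≤ ·) ≠ [] := List.ne_nil_of_length_pos hlen
  have hhead : (H.sort (· ≤ ·)).head hne = H.min' hH := by
    have h0 : (H.sort (· ≤ ·))[0] = H.min' (Finset.card_pos.1 (by rwa [Finset.length_sort] at hlen)) :=
      Finset.sorted_zero_eq_min'
    rw [← List.head_eq_getElem_zero hne] at h0
    exact h0
  unfold semigroupProd
  rw [foldl_mul_eq]
  calc g (H.min' hH) * (((H.sort (· ≤ ·)).tail).map g).prod
      = (((H.sort (· ≤ ·)).head hne :: (H.sort (· ≤ ·)).tail).map g).prod := by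
        rw [List.map_cons, List.prod_cons, hhead]
    _ = ((H.sort (· ≤ ·)).map g).prod := by rw [List.cons_head_tail]
    _ = ∏ t ∈ H, g t := by
        rw [Finset.prod_eq_multiset_prod, ← Finset.sort_eq (s := H) (r := (· ≤ ·)), Multiset.map_coe,
          Multiset.prod_coe]

lemma coe_semigroupProd {S : Type*} [CommSemigroup S] (f : ℕ → S) (H : Finset ℕ)
    (hH : H.Nonempty) :
    ((semigroupProd f H hH : S) : WithOne S) = ∏ t ∈ H, ((f t : S) : WithOne S) := by
  rw [semigroupProd_map (fun s : S => (s : WithOne S)) (fun a b => WithOne.coe_mul a b) f H hH]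
  exact semigroupProd_eq_prod _ H hH

lemma semigroupProd_congr {S : Type*} [Semigroup S] (f : ℕ → S) {H H' : Finset ℕ}
    (h : H = H') {hH : H.Nonempty} {hH' : H'.Nonempty} :
    semigroupProd f H hH = semigroupProd f H' hH' := by subst h; rfl

/- ### J-sets and products over unions of disjoint blocks -/

private lemma blocks_jset {S : Type*} [CommSemigroup S] {A : Set S} (hA : IsJSet A)
    (F : Finset (ℕ → S)) (hF : F.Nonempty) (J : ℕ → Finset ℕ)
    (hne : ∀ n, (J n).Nonempty) (hdisj : ∀ m n, m ≠ n → Disjoint (J m) (J n)) :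
    ∃ K : Finset ℕ, K.Nonempty ∧ ∃ (hU : (K.biUnion J).Nonempty) (a : S),
      ∀ f ∈ F, a * semigroupProd f (K.biUnion J) hU ∈ A := by
  classical
  obtain ⟨a, K, hK, ha⟩ := hA (F.image fun f => fun n => semigroupProd f (J n) (hne n))
    (hF.image _)
  obtain ⟨n₀, hn₀⟩ := hK
  obtain ⟨t₀, ht₀⟩ := hne n₀
  have hU : (K.biUnion J).Nonempty := ⟨t₀, Finset.mem_biUnion.2 ⟨n₀, hn₀, ht₀⟩⟩
  refine ⟨K, ⟨n₀, hn₀⟩, hU, a, fun f hf => ?_⟩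
  have hdisj' : (↑K : Set ℕ).PairwiseDisjoint J := fun m _ n _ hmn => hdisj m n hmn
  have hK' : K.Nonempty := ⟨n₀, hn₀⟩
  have key : semigroupProd (fun n => semigroupProd f (J n) (hne n)) K hK'
      = semigroupProd f (K.biUnion J) hU := by
    apply WithOne.coe_inj.1
    rw [coe_semigroupProd, coe_semigroupProd, Finset.prod_biUnion hdisj']
    exact Finset.prod_congr rfl fun n _ => coe_semigroupProd f (J n) (hne n)
  have := ha _ (Finset.mem_image_of_mem (fun f => fun n => semigroupProd f (J n) (hne n)) hf)
  rwa [key] at this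

/- ### Finite sums of streams of multisets -/

private lemma FS_pattern :
    ∀ (z : Stream' (Multiset ℕ)) (m : Multiset ℕ), m ∈ Hindman.FS z →
      ∀ k : ℕ, (∀ n, z.get n = ({n + k} : Multiset ℕ)) →
        m ≠ 0 ∧ m.Nodup ∧ ∀ t ∈ m, k ≤ t := by
  intro z m h
  induction h with
  | head' a =>
    intro k hk
    have : a.head = ({0 + k} : Multiset ℕ) := hk 0
    rw [this]
    refine ⟨by simp, Multiset.nodup_singleton _, fun t ht => ?_⟩
    rw [Multiset.mem_singleton] at ht
    omega
  | tail' a m h ih =>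
    intro k hk
    have htail : ∀ n, a.tail.get n = ({n + (k + 1)} : Multiset ℕ) := by
      intro n
      have : a.tail.get n = a.get (n + 1) := rfl
      rw [this, hk (n + 1)]
      congr 1
      omega
    obtain ⟨h1, h2, h3⟩ := ih (k + 1) htail
    exact ⟨h1, h2, fun t ht => le_trans (by omega) (h3 t ht)⟩
  | cons' a m h ih =>
    intro k hk
    have htail : ∀ n, a.tail.get n = ({n + (k + 1)} : Multiset ℕ) := by
      intro n
      have : a.tail.get n = a.get (n + 1) := rfl
      rw [this, hk (n + 1)]
      congr 1
      omega
    obtain ⟨h1, h2, h3⟩ := ih (k + 1) htail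
    have hhead : a.head = ({0 + k} : Multiset ℕ) := hk 0
    rw [hhead]
    refine ⟨by simp, ?_, ?_⟩
    · rw [Multiset.nodup_add]
      refine ⟨Multiset.nodup_singleton _, h2, Multiset.disjoint_left.2 fun {t} ht ht' => ?_⟩
      rw [Multiset.mem_singleton] at ht
      have := h3 t ht'
      omega
    · intro t ht
      rw [Multiset.mem_add] at ht
      rcases ht with ht | ht
      · rw [Multiset.mem_singleton] at ht; omega
      · have := h3 t ht; omega

private lemma toFinset_finset_sum (K : Finset ℕ) (g : ℕ → Multiset ℕ) :
    (∑ m ∈ K, g m).toFinset = K.biUnion fun m => (g m).toFinset := by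
  classical
  induction K using Finset.induction_on with
  | empty => simp
  | insert _ _ h ih =>
    rw [Finset.sum_insert h, Multiset.toFinset_add, ih, Finset.biUnion_insert]

/- ### The main theorem -/

theorem jset_prod {S₁ S₂ : Type*} [CommSemigroup S₁] [CommSemigroup S₂]
    {A : Set S₁} {B : Set S₂} (hA : IsJSet A) (hB : IsJSet B) :
    IsJSet (A ×ˢ B) := by
  classical
  intro F hF
  -- the stream of singletons in the additive semigroup of multisets
  let x : Stream' (Multiset ℕ) := fun n => ({n} : Multiset ℕ)
  -- the "good for A" colour
  let C : Set (Multiset ℕ) := {m | ∃ (h : m.toFinset.Nonempty) (a : S₁),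
    ∀ f ∈ F, a * semigroupProd (fun n => (f n).1) m.toFinset h ∈ A}
  have hcov : Hindman.FS x ⊆ ⋃₀ {C ∩ Hindman.FS x, Cᶜ ∩ Hindman.FS x} := by
    intro m hm
    by_cases h : m ∈ C
    · exact Set.mem_sUnion.2 ⟨_, Set.mem_insert _ _, h, hm⟩
    · exact Set.mem_sUnion.2 ⟨_, Set.mem_insert_of_mem _ rfl, h, hm⟩
  obtain ⟨c, hc, y, hy⟩ := Hindman.FS_partition_regular x {C ∩ Hindman.FS x, Cᶜ ∩ Hindman.FS x}
    ((Set.finite_singleton _).insert _) hcov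
  have hcsub : c ⊆ Hindman.FS x := by
    rcases hc with rfl | hc
    · exact Set.inter_subset_right
    · rw [Set.mem_singleton_iff] at hc; subst hc; exact Set.inter_subset_right
  have hyx : Hindman.FS y ⊆ Hindman.FS x := fun m hm => hcsub (hy hm)
  have hxfact : ∀ m ∈ Hindman.FS x, m ≠ 0 ∧ m.Nodup := by
    intro m hm
    obtain ⟨h1, h2, _⟩ := FS_pattern x m hm 0 fun n => rfl
    exact ⟨h1, h2⟩
  -- the blocks
  let J : ℕ → Finset ℕ := fun m => (y.get m).toFinset
  have hymem : ∀ m, y.get m ∈ Hindman.FS x := fun m => hyx (Hindman.FS.singleton y m)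
  have hJne : ∀ m, (J m).Nonempty := fun m =>
    Multiset.toFinset_nonempty.2 (hxfact _ (hymem m)).1
  have hJdisj : ∀ m n, m ≠ n → Disjoint (J m) (J n) := by
    have key : ∀ m n, m < n → Disjoint (J m) (J n) := by
      intro m n hlt
      have hadd : y.get m + y.get n ∈ Hindman.FS x := hyx (Hindman.FS.add_two y m n hlt)
      have hnd := (hxfact _ hadd).2
      rw [Finset.disjoint_left]
      intro t htm htn
      have hcm : 1 ≤ Multiset.count t (y.get m) :=
        Multiset.one_le_count_iff_mem.2 (Multiset.mem_toFinset.1 htm)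
      have hcn : 1 ≤ Multiset.count t (y.get n) :=
        Multiset.one_le_count_iff_mem.2 (Multiset.mem_toFinset.1 htn)
      have := Multiset.nodup_iff_count_le_one.1 hnd t
      rw [Multiset.count_add] at this
      omega
    intro m n hmn
    rcases lt_or_gt_of_ne hmn with h | h
    · exact key m n h
    · exact (key n m h).symm
  have hsumFS : ∀ K : Finset ℕ, K.Nonempty → (∑ m ∈ K, y.get m) ∈ Hindman.FS y :=
    fun K hK => Hindman.FS.finset_sum y K hK
  have hsumtoF : ∀ K : Finset ℕ, (∑ m ∈ K, y.get m).toFinset = K.biUnion J :=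
    fun K => toFinset_finset_sum K _
  rcases hc with rfl | hc
  · -- good colour: every finite union of blocks is good for `A`; use `B` on the blocks
    obtain ⟨K, hK, hU, a₂, ha₂⟩ :=
      blocks_jset hB (F.image fun f => fun n => (f n).2) (hF.image _) J hJne hJdisj
    have hCmem : (∑ m ∈ K, y.get m) ∈ C ∩ Hindman.FS x := hy (hsumFS K hK)
    obtain ⟨h₁, a₁, ha₁⟩ := hCmem.1
    refine ⟨(a₁, a₂), K.biUnion J, hU, fun f hf => ?_⟩
    rw [Set.mem_prod]
    constructor
    · have h1 := ha₁ f hf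
      rw [semigroupProd_congr (fun n => (f n).1) (hsumtoF K)
        (hH' := hU)] at h1
      have heq : ((a₁, a₂) * semigroupProd f (K.biUnion J) hU).1
          = a₁ * semigroupProd (fun n => (f n).1) (K.biUnion J) hU := by
        have : (semigroupProd f (K.biUnion J) hU).1
            = semigroupProd (fun n => (f n).1) (K.biUnion J) hU :=
          semigroupProd_map (Prod.fst) (fun _ _ => rfl) f _ _
        rw [Prod.fst_mul, this]
      rw [heq]
      exact h1
    · have h2 := ha₂ _ (Finset.mem_image_of_mem (fun f => fun n => (f n).2) hf)
      have heq : ((a₁, a₂) * semigroupProd f (K.biUnion J) hU).2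
          = a₂ * semigroupProd (fun n => (f n).2) (K.biUnion J) hU := by
        have : (semigroupProd f (K.biUnion J) hU).2
            = semigroupProd (fun n => (f n).2) (K.biUnion J) hU :=
          semigroupProd_map (Prod.snd) (fun _ _ => rfl) f _ _
        rw [Prod.snd_mul, this]
      rw [heq]
      exact h2
  · -- bad colour: contradiction with `A` being a J-set on the blocks
    exfalso
    rw [Set.mem_singleton_iff] at hc; subst hc
    obtain ⟨K, hK, hU, a₁, ha₁⟩ :=
      blocks_jset hA (F.image fun f => fun n => (f n).1) (hF.image _) J hJne hJdisj
    have hmem : (∑ m ∈ K, y.get m) ∈ Cᶜ ∩ Hindman.FS x := hy (hsumFS K hK)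
    apply hmem.1
    refine ⟨(hsumtoF K).symm ▸ hU, a₁, fun f hf => ?_⟩
    rw [semigroupProd_congr (fun n => (f n).1) (hsumtoF K) (hH' := hU)]
    exact ha₁ _ (Finset.mem_image_of_mem (fun f => fun n => (f n).1) hf)
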